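/- Consider the problem: minimize (1/2)(w-(β⁺-β⁻))² + (1/2)‖z-θ‖² + λ(β⁺+β⁻) + λ‖θ‖₁ subject to β⁺,β⁻ ≥ 0, ‖θ‖₁ ≤ β⁺+β⁻, with λ > 0 and w ≥ 0. Suppose ‖z‖_∞ ≤ w and λ ∈ [λ̃₁, w), where λ̃₁ = inf{μ ≥ 0 : ‖S(z,μ)‖₁ + μ ≤ w}. Then the unique solution is β⁺ = w - λ, β⁻ = 0, θ = S(z,λ) (componentwise soft-thresholding). -/

import Mathlib

noncomputable def softTh (x t : ℝ) : ℝ := Real.sign x * max (|x| - t) 0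

noncomputable def objFn (n : ℕ) (lam1 lam2 w : ℝ) (z : Fin n → ℝ)
    (p : ℝ × ℝ × (Fin n → ℝ)) : ℝ :=
  (1/2) * (w - (p.1 - p.2.1))^2 + (1/2) * (∑ k, (z k - p.2.2 k)^2)
    + lam1 * (p.1 + p.2.1) + lam2 * ∑ k, |p.2.2 k|

def Feasible (n : ℕ) (p : ℝ × ℝ × (Fin n → ℝ)) : Prop :=
  0 ≤ p.1 ∧ 0 ≤ p.2.1 ∧ (∑ k, |p.2.2 k|) ≤ p.1 + p.2.1

lemma softTh_cases (x t : ℝ) (ht : 0 ≤ t) :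
    |x - softTh x t| ≤ t ∧ (x - softTh x t) * softTh x t = t * |softTh x t| ∧
      |softTh x t| = max (|x| - t) 0 := by
  unfold softTh
  rcases le_total (|x| - t) 0 with h | h
  · rw [max_eq_right h]
    have hx : |x| ≤ t := by linarith
    simp only [mul_zero, sub_zero, abs_zero, mul_zero]
    exact ⟨hx, by simp, trivial⟩
  · rw [max_eq_left h]
    rcases lt_trichotomy x 0 with hx | hx | hx
    · rw [Real.sign_of_neg hx]
      rw [abs_of_neg hx] at h ⊢
      have h1 : x + t ≤ 0 := by linarith
      have h2 : -1 * (-x - t) = x + t := by ring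
      rw [h2]
      refine ⟨?_, ?_, ?_⟩
      · rw [abs_le]; constructor <;> linarith
      · rw [abs_of_nonpos h1]; ring
      · rw [abs_of_nonpos h1]; ring
    · subst hx
      simp only [Real.sign_zero, zero_mul, sub_zero, abs_zero, mul_zero]
      simp only [abs_zero] at h ⊢
      exact ⟨ht, by simp, by linarith⟩
    · rw [Real.sign_of_pos hx]
      rw [abs_of_pos hx] at h ⊢
      have h1 : 0 ≤ x - t := by linarith
      have h2 : 1 * (x - t) = x - t := by ring
      rw [h2]
      refine ⟨?_, ?_, ?_⟩
      · rw [abs_le]; constructor <;> linarith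
      · rw [abs_of_nonneg h1]; ring
      · rw [abs_of_nonneg h1]

lemma coord (x t θ : ℝ) (ht : 0 ≤ t) :
    (1/2)*(x - softTh x t)^2 + t*|softTh x t| + (1/2)*(θ - softTh x t)^2
      ≤ (1/2)*(x - θ)^2 + t*|θ| := by
  obtain ⟨h1, h2, -⟩ := softTh_cases x t ht
  rw [abs_le] at h1
  set s := softTh x t
  rcases le_total 0 θ with h | h
  · rw [abs_of_nonneg h]
    nlinarith [mul_nonneg (sub_nonneg.2 h1.2) h]
  · rw [abs_of_nonpos h]
    nlinarith [mul_nonpos_of_nonneg_of_nonpos (by linarith : (0:ℝ) ≤ x - s + t) h]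

lemma key (n : ℕ) (w lam : ℝ) (z : Fin n → ℝ) (hlam : 0 < lam)
    (q : ℝ × ℝ × (Fin n → ℝ)) :
    objFn n lam lam w z (w - lam, 0, fun k => softTh (z k) lam)
      + (1/2)*(q.1 - q.2.1 - (w - lam))^2 + 2*lam*q.2.1
      + (1/2)*(∑ k, (q.2.2 k - softTh (z k) lam)^2)
    ≤ objFn n lam lam w z q := by
  have hsum : ∑ k, ((1/2)*(z k - softTh (z k) lam)^2 + lam*|softTh (z k) lam|
        + (1/2)*(q.2.2 k - softTh (z k) lam)^2)
      ≤ ∑ k, ((1/2)*(z k - q.2.2 k)^2 + lam*|q.2.2 k|) :=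
    Finset.sum_le_sum fun k _ => coord (z k) lam (q.2.2 k) hlam.le
  simp only [Finset.sum_add_distrib, ← Finset.mul_sum] at hsum
  simp only [objFn]
  nlinarith [hsum]

lemma feas (n : ℕ) (w : ℝ) (z : Fin n → ℝ) (lam : ℝ) (hlam : 0 < lam)
    (hzw : (⨆ k, |z k|) ≤ w)
    (hlow : sInf {mu : ℝ | 0 ≤ mu ∧ (∑ k, |softTh (z k) mu|) + mu ≤ w} ≤ lam)
    (hup : lam < w) :
    (∑ k, |softTh (z k) lam|) + lam ≤ w := by
  have hzk : ∀ k, |z k| ≤ w := fun k =>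
    le_trans (le_ciSup (f := fun k => |z k|) (Set.Finite.bddAbove (Set.finite_range _)) k) hzw
  set g : ℝ → ℝ := fun m => (∑ k, max (|z k| - m) 0) + m with hg
  have habs : ∀ m, 0 ≤ m → (∑ k, |softTh (z k) m|) = ∑ k, max (|z k| - m) 0 :=
    fun m hm => Finset.sum_congr rfl fun k _ => (softTh_cases (z k) m hm).2.2
  -- g at w equals w
  have hgw : g w = w := by
    have : ∀ k : Fin n, max (|z k| - w) 0 = 0 := fun k =>
      max_eq_right (by linarith [hzk k])
    simp [hg, this]
  -- convexity
  have hconv : ∀ a b t : ℝ, 0 ≤ t → t ≤ 1 →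
      g (t*a + (1-t)*b) ≤ t * g a + (1-t) * g b := by
    intro a b t ht0 ht1
    have hsum : (∑ k, max (|z k| - (t*a + (1-t)*b)) 0)
        ≤ ∑ k, (t * max (|z k| - a) 0 + (1-t) * max (|z k| - b) 0) := by
      refine Finset.sum_le_sum fun k _ => ?_
      have h1 : max (|z k| - a) 0 ≥ |z k| - a := le_max_left _ _
      have h2 : max (|z k| - a) 0 ≥ 0 := le_max_right _ _
      have h3 : max (|z k| - b) 0 ≥ |z k| - b := le_max_left _ _
      have h4 : max (|z k| - b) 0 ≥ 0 := le_max_right _ _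
      refine max_le ?_ ?_
      · nlinarith
      · nlinarith
    simp only [Finset.sum_add_distrib, ← Finset.mul_sum] at hsum
    simp only [hg]
    nlinarith [hsum]
  -- Lipschitz above
  have hlip : ∀ m : ℝ, lam ≤ m → g lam ≤ g m + (n : ℝ) * (m - lam) := by
    intro m hm
    have hsum : (∑ k, max (|z k| - lam) 0)
        ≤ ∑ k, (max (|z k| - m) 0 + (m - lam)) := by
      refine Finset.sum_le_sum fun k _ => ?_
      have h3 : max (|z k| - m) 0 ≥ |z k| - m := le_max_left _ _
      have h4 : max (|z k| - m) 0 ≥ 0 := le_max_right _ _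
      refine max_le (by linarith) (by linarith)
    rw [Finset.sum_add_distrib, Finset.sum_const, Finset.card_univ, Fintype.card_fin,
      nsmul_eq_mul] at hsum
    simp only [hg]
    linarith
  -- nonempty
  set T := {mu : ℝ | 0 ≤ mu ∧ (∑ k, |softTh (z k) mu|) + mu ≤ w} with hT
  have hTne : T.Nonempty := by
    refine ⟨w, le_of_lt (hlam.trans hup), ?_⟩
    rw [habs w (le_of_lt (hlam.trans hup))]
    have := hgw
    simp only [hg] at this
    linarith
  have hmain : g lam ≤ w := by
    refine le_of_forall_pos_le_add fun ε hε => ?_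
    have hε' : 0 < ε / (n + 1) := by positivity
    obtain ⟨m, hmT, hmlt⟩ := Real.lt_sInf_add_pos hTne hε'
    have hgm : g m ≤ w := by
      rw [hg]; obtain ⟨hm0, hm1⟩ := hmT
      rw [habs m hm0] at hm1; simpa using hm1
    have hmlam : m < lam + ε / (n + 1) := lt_of_lt_of_le hmlt (by linarith [hlow])
    rcases le_total m lam with hc | hc
    · -- convex combination between m and w
      have hwm : 0 < w - m := by linarith
      set t : ℝ := (w - lam) / (w - m) with htdef
      have ht0 : 0 ≤ t := div_nonneg (by linarith) hwm.le
      have ht1 : t ≤ 1 := (div_le_one hwm).2 (by linarith)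
      have hco : t * m + (1 - t) * w = lam := by
        rw [htdef, div_mul_eq_mul_div, one_sub_div hwm.ne', div_mul_eq_mul_div, ← add_div,
          div_eq_iff hwm.ne']
        ring
      have := hconv m w t ht0 ht1
      rw [hco, hgw] at this
      have : g lam ≤ t * g m + (1 - t) * w := this
      nlinarith [this, hgm, ht0, ht1, sub_nonneg.2 ht1]
    · have := hlip m hc
      have hn1 : (n : ℝ) + 1 > 0 := by positivity
      have hmm : (n:ℝ) * (m - lam) ≤ (n:ℝ) * (ε/(n+1)) :=
        mul_le_mul_of_nonneg_left (by linarith) (Nat.cast_nonneg n)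
      have key2 : g lam ≤ w + (n : ℝ) * (ε / ((n:ℝ)+1)) := le_trans this (add_le_add hgm hmm)
      have hfrac : (n : ℝ) * (ε / (n+1)) ≤ ε := by
        have h := mul_le_mul_of_nonneg_right (show (n:ℝ) ≤ n+1 by linarith) hε'.le
        have he : ((n:ℝ)+1) * (ε/(n+1)) = ε := by field_simp
        linarith
      linarith [key2, hfrac]
  rw [habs lam hlam.le]
  simpa [hg] using hmain

theorem stmt_12 (n : ℕ) (w : ℝ) (z : Fin n → ℝ) (lam : ℝ) (hlam : 0 < lam)
    (hzw : (⨆ k, |z k|) ≤ w)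
    (hlow : sInf {mu : ℝ | 0 ≤ mu ∧ (∑ k, |softTh (z k) mu|) + mu ≤ w} ≤ lam)
    (hup : lam < w) :
    ∀ p : ℝ × ℝ × (Fin n → ℝ),
      (Feasible n p ∧ ∀ q : ℝ × ℝ × (Fin n → ℝ), Feasible n q →
          objFn n lam lam w z p ≤ objFn n lam lam w z q)
        ↔ p = (w - lam, 0, fun k => softTh (z k) lam) := by
  have hfe := feas n w z lam hlam hzw hlow hup
  set pstar : ℝ × ℝ × (Fin n → ℝ) := (w - lam, 0, fun k => softTh (z k) lam) with hps
  have hfeasstar : Feasible n pstar := by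
    refine ⟨by simp [hps]; linarith, le_refl 0, ?_⟩
    simp only [hps]
    linarith
  intro p
  constructor
  · rintro ⟨hfp, hmin⟩
    have h1 := hmin pstar hfeasstar
    have h2 := key n w lam z hlam p
    have hsq : 0 ≤ ∑ k, (p.2.2 k - softTh (z k) lam)^2 :=
      Finset.sum_nonneg fun k _ => sq_nonneg _
    have hb : 0 ≤ p.2.1 := hfp.2.1
    have hd2 : 0 ≤ (p.1 - p.2.1 - (w - lam))^2 := sq_nonneg _
    have hz1 : (1/2)*(p.1 - p.2.1 - (w - lam))^2 = 0 := by nlinarith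
    have hz2 : p.2.1 = 0 := by nlinarith
    have hz3 : ∑ k, (p.2.2 k - softTh (z k) lam)^2 = 0 := by nlinarith
    have hd : p.1 - p.2.1 - (w - lam) = 0 := by
      have := pow_eq_zero_iff (n := 2) (by norm_num) |>.1 (by linarith : (p.1 - p.2.1 - (w - lam))^2 = 0)
      exact this
    have hth : p.2.2 = fun k => softTh (z k) lam := by
      funext k
      have := (Finset.sum_eq_zero_iff_of_nonneg
        (fun k _ => sq_nonneg (p.2.2 k - softTh (z k) lam))).1 hz3 k (Finset.mem_univ k)
      have := pow_eq_zero_iff (n := 2) (by norm_num) |>.1 this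
      linarith [this]
    have hp1 : p.1 = w - lam := by linarith
    rw [hps, Prod.ext_iff, Prod.ext_iff]
    exact ⟨hp1, hz2, hth⟩
  · rintro rfl
    refine ⟨hfeasstar, fun q hq => ?_⟩
    have h2 := key n w lam z hlam q
    have hsq : 0 ≤ ∑ k, (q.2.2 k - softTh (z k) lam)^2 :=
      Finset.sum_nonneg fun k _ => sq_nonneg _
    nlinarith [sq_nonneg (q.1 - q.2.1 - (w - lam)), hq.2.1]
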